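/- Over Z/2^m Z with m ≥ 2, the solutions (a_1,a_2,a_3,a_4) of M_4(a_1,a_2,a_3,a_4) = Id are exactly the 4-tuples of the form (-y, x, y, -x) with xy = 0. -/

import Mathlib

open Matrix

def matM {A : Type*} [CommRing A] (x : A) : Matrix (Fin 2) (Fin 2) A := !![x, -1; 1, 0]

def Mn {A : Type*} [CommRing A] {n : ℕ} (a : Fin n → A) : Matrix (Fin 2) (Fin 2) A :=
  ((List.ofFn fun i => matM (a i)).reverse).prod

theorem key {A : Type*} [CommRing A] (a : Fin 4 → A) :
    Mn a = 1 ↔ ∃ x y : A, x * y = 0 ∧ a = ![-y, x, y, -x] := by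
  rw [show Mn a = matM (a 3) * matM (a 2) * matM (a 1) * matM (a 0) by
    simp [Mn, List.ofFn_succ, mul_assoc]]
  rw [← Matrix.ext_iff]
  simp [Fin.forall_fin_two, matM, Matrix.mul_fin_two]
  constructor
  · rintro ⟨⟨h1, h2⟩, h3, h4⟩
    refine ⟨a 1, a 2, by linear_combination h4, ?_⟩
    funext i
    fin_cases i <;> simp
    · linear_combination a 0 * h4 - h3
    · linear_combination h2 + a 3 * h4
  · rintro ⟨x, y, hxy, rfl⟩
    simp
    refine ⟨⟨?_, ?_⟩, ?_, ?_⟩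
    · linear_combination (1 + x*y) * hxy
    · linear_combination x * hxy
    · linear_combination -y * hxy
    · linear_combination hxy

theorem stmt9 (m : ℕ) (hm : 2 ≤ m) :
    {a : Fin 4 → ZMod (2 ^ m) | Mn a = (1 : Matrix (Fin 2) (Fin 2) (ZMod (2 ^ m)))} =
      {a | ∃ x y : ZMod (2 ^ m), x * y = 0 ∧ a = ![-y, x, y, -x]} := by
  ext a
  exact key a
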